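/- Let f : ℝ^d → ℝ be a continuous, bounded, nonnegative function with ∫_{ℝ^d} f dλ = 1, and let X and Y be independent random points in ℝ^d, each with probability density f with respect to Lebesgue measure. Then lim_{r→0+} P(‖X − Y‖ ≤ r) / r^d = ζ_d · ∫_{ℝ^d} f(x)^2 dλ(x). -/

import Mathlib

open MeasureTheory ProbabilityTheory Filter Metric

section Aux

variable {d : ℕ}

local notation "E" => EuclideanSpace ℝ (Fin d)

lemma vol_closedBall (x : E) {r : ℝ} (hr : 0 ≤ r) :
    (volume (closedBall x r)).toReal
      = r ^ d * (volume (closedBall (0 : E) 1)).toReal := by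
  rw [Measure.addHaar_closedBall' volume x hr, ENNReal.toReal_mul,
    ENNReal.toReal_ofReal (pow_nonneg hr _), finrank_euclideanSpace_fin]

lemma g_eq (f : E → ℝ) (x : E) (r : ℝ) :
    ∫ y in closedBall x r, f y = ∫ z in closedBall (0 : E) r, f (x + z) := by
  have h : MeasurePreserving (fun z : E => x + z) volume volume :=
    measurePreserving_add_left volume x
  have he : MeasurableEmbedding (fun z : E => x + z) :=
    (MeasurableEquiv.addLeft x).measurableEmbedding
  have hpre : (fun z : E => x + z) ⁻¹' closedBall x r = closedBall (0 : E) r := by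
    ext z
    simp [Metric.mem_closedBall, dist_eq_norm]
  rw [← h.setIntegral_preimage_emb he f (closedBall x r), hpre]

lemma g_cont {f : E → ℝ} (hf_cont : Continuous f) {M : ℝ}
    (hM : ∀ x, |f x| ≤ M) (r : ℝ) :
    Continuous fun x : E => ∫ y in closedBall x r, f y := by
  have : Continuous fun x : E => ∫ z in closedBall (0 : E) r, f (x + z) := by
    apply continuous_of_dominated (bound := fun _ => M)
    · intro x
      exact (hf_cont.comp (continuous_const.add continuous_id)).aestronglyMeasurable
    · intro x
      exact Eventually.of_forall fun z => hM (x + z)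
    · exact integrableOn_const measure_closedBall_lt_top.ne
    · exact Eventually.of_forall fun z => hf_cont.comp (continuous_id.add continuous_const)
  simpa only [← g_eq] using this


lemma pointwise_limit {f : E → ℝ} (hf_cont : Continuous f)
    (hf_int : Integrable f (volume : Measure E)) (x : E) :
    Tendsto (fun r : ℝ => (∫ y in closedBall x r, f y) / r ^ d)
      (nhdsWithin 0 (Set.Ioi 0))
      (nhds ((volume (closedBall (0 : E) 1)).toReal * f x)) := by
  set ζ : ℝ := (volume (closedBall (0 : E) 1)).toReal with hζ
  have hζ0 : 0 ≤ ζ := ENNReal.toReal_nonneg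
  rw [Metric.tendsto_nhdsWithin_nhds]
  intro ε hε
  set ε' : ℝ := ε / (ζ + 1) with hε'
  have hε'0 : 0 < ε' := div_pos hε (by linarith)
  obtain ⟨δ, hδ0, hδ⟩ := Metric.continuousAt_iff.1 (hf_cont.continuousAt (x := x)) ε' hε'0
  refine ⟨δ, hδ0, fun r hr hrd => ?_⟩
  have hr0 : 0 < r := hr
  have hrδ : r < δ := by
    have := hrd
    rwa [Real.dist_eq, sub_zero, abs_of_pos hr0] at this
  have hrd0 : (0:ℝ) < r ^ d := pow_pos hr0 d
  have hvol : (volume (closedBall x r)).toReal = r ^ d * ζ := vol_closedBall x hr0.le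
  -- key estimate
  have hconst : ∫ y in closedBall x r, f x = (r ^ d * ζ) * f x := by
    rw [setIntegral_const, measureReal_def, hvol, smul_eq_mul]
  have hsub : (∫ y in closedBall x r, f y) - (r ^ d * ζ) * f x
      = ∫ y in closedBall x r, (f y - f x) := by
    rw [integral_sub hf_int.integrableOn
      (integrableOn_const measure_closedBall_lt_top.ne), hconst]
  have hbound : ‖∫ y in closedBall x r, (f y - f x)‖ ≤ ε' * (r ^ d * ζ) := by
    have := norm_setIntegral_le_of_norm_le_const (μ := volume)
      (s := closedBall x r) (f := fun y => f y - f x) (C := ε')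
      measure_closedBall_lt_top ?_
    · rwa [measureReal_def, hvol] at this
    · intro y hy
      have : dist y x < δ := lt_of_le_of_lt (Metric.mem_closedBall.1 hy) hrδ
      have h := hδ this
      rw [Real.dist_eq] at h
      simpa [Real.norm_eq_abs] using h.le
  rw [Real.dist_eq]
  have heq : (∫ y in closedBall x r, f y) / r ^ d - ζ * f x
      = ((∫ y in closedBall x r, f y) - (r ^ d * ζ) * f x) / r ^ d := by
    field_simp
  rw [heq, abs_div, abs_of_pos hrd0, div_lt_iff₀ hrd0]
  calc |(∫ y in closedBall x r, f y) - (r ^ d * ζ) * f x|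
      ≤ ε' * (r ^ d * ζ) := by rw [hsub]; exact hbound
    _ < ε * r ^ d := by
        have h1 : ε' * (r ^ d * ζ) = (ε' * ζ) * r ^ d := by ring
        have h2 : ε' * ζ < ε := by
          have : ε' * ζ < ε' * (ζ + 1) := by nlinarith
          have h3 : ε' * (ζ + 1) = ε := div_mul_cancel₀ ε (by linarith)
          linarith
        rw [h1]
        exact mul_lt_mul_of_pos_right h2 hrd0

end Aux

/-- For two independent points with common bounded continuous density `f`,
`P(‖X − Y‖ ≤ r)/r^d → ζ_d ∫ f²` as `r → 0⁺`. -/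
theorem close_pair_probability_asymptotics (d : ℕ)
    (f : EuclideanSpace ℝ (Fin d) → ℝ)
    (hf_cont : Continuous f) (hf_bdd : ∃ M : ℝ, ∀ x, f x ≤ M)
    (hf_nonneg : ∀ x, 0 ≤ f x)
    (hf_int : ∫ x, f x = 1)
    (Ω : Type) (mΩ : MeasurableSpace Ω) (P : Measure Ω) (hP : IsProbabilityMeasure P)
    (X Y : Ω → EuclideanSpace ℝ (Fin d))
    (hX : Measurable X) (hY : Measurable Y)
    (hindep : IndepFun X Y P)
    (hlawX : Measure.map X P = volume.withDensity (fun x => ENNReal.ofReal (f x)))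
    (hlawY : Measure.map Y P = volume.withDensity (fun x => ENNReal.ofReal (f x))) :
    Tendsto (fun r : ℝ => (P {ω | ‖X ω - Y ω‖ ≤ r}).toReal / r ^ d)
      (nhdsWithin 0 (Set.Ioi 0))
      (nhds ((volume (Metric.closedBall (0 : EuclideanSpace ℝ (Fin d)) 1)).toReal *
        ∫ x, f x ^ 2)) := by
  obtain ⟨M, hM⟩ := hf_bdd
  have hM0 : 0 ≤ M := (hf_nonneg 0).trans (hM 0)
  have hMabs : ∀ x, |f x| ≤ M := fun x => by
    rw [abs_of_nonneg (hf_nonneg x)]; exact hM x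
  -- integrability of f
  have hfi : Integrable f (volume : Measure (EuclideanSpace ℝ (Fin d))) := by
    by_contra h
    rw [integral_undef h] at hf_int
    exact one_ne_zero hf_int.symm
  set ζ : ℝ := (volume (closedBall (0 : EuclideanSpace ℝ (Fin d)) 1)).toReal with hζdef
  have hζ0 : 0 ≤ ζ := ENNReal.toReal_nonneg
  set g : ℝ → EuclideanSpace ℝ (Fin d) → ℝ :=
    fun r x => ∫ y in closedBall x r, f y with hgdef
  have hg_cont : ∀ r, Continuous (g r) := fun r => g_cont hf_cont hMabs r
  have hg_nonneg : ∀ r x, 0 ≤ g r x := fun r x =>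
    setIntegral_nonneg measurableSet_closedBall fun y _ => hf_nonneg y
  have hg_le : ∀ (r : ℝ), 0 ≤ r → ∀ x, g r x ≤ M * (r ^ d * ζ) := by
    intro r hr x
    have h1 : g r x ≤ ∫ _ in closedBall x r, M :=
      setIntegral_mono_on hfi.integrableOn
        (integrableOn_const measure_closedBall_lt_top.ne)
        measurableSet_closedBall fun y _ => hM y
    have h2 : ∫ _ in closedBall x r, M = (r ^ d * ζ) * M := by
      rw [setIntegral_const, measureReal_def, vol_closedBall x hr, smul_eq_mul]
    rw [h2] at h1
    linarith
  -- the law μ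
  set μ : Measure (EuclideanSpace ℝ (Fin d)) :=
    volume.withDensity (fun x => ENNReal.ofReal (f x)) with hμdef
  have hμuniv : μ Set.univ = 1 := by
    rw [hμdef, withDensity_apply _ MeasurableSet.univ, Measure.restrict_univ,
      ← ofReal_integral_eq_lintegral_ofReal hfi (Eventually.of_forall hf_nonneg),
      hf_int, ENNReal.ofReal_one]
  have hμprob : IsProbabilityMeasure μ := ⟨hμuniv⟩
  -- joint law
  have hmap : Measure.map (fun ω => (X ω, Y ω)) P = μ.prod μ := by
    rw [(indepFun_iff_map_prod_eq_prod_map_map hX.aemeasurable hY.aemeasurable).mp hindep,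
      hlawX, hlawY]
  -- key identity for r > 0
  have hkey : ∀ r : ℝ, 0 < r →
      (P {ω | ‖X ω - Y ω‖ ≤ r}).toReal = ∫ x, f x * g r x := by
    intro r hr
    have hT : MeasurableSet {p : EuclideanSpace ℝ (Fin d) × EuclideanSpace ℝ (Fin d) |
        ‖p.1 - p.2‖ ≤ r} :=
      measurableSet_le ((continuous_fst.sub continuous_snd).norm.measurable) measurable_const
    have h1 : P {ω | ‖X ω - Y ω‖ ≤ r} = (μ.prod μ) {p | ‖p.1 - p.2‖ ≤ r} := by
      rw [← hmap, Measure.map_apply (hX.prodMk hY) hT]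
      rfl
    have h2 : (μ.prod μ) {p | ‖p.1 - p.2‖ ≤ r} = ∫⁻ x, μ (closedBall x r) ∂μ := by
      rw [Measure.prod_apply hT]
      congr 1
      ext x
      congr 1
      ext y
      simp only [Set.mem_preimage, Set.mem_setOf_eq, Metric.mem_closedBall, dist_eq_norm,
        norm_sub_rev x y]
    have h3 : ∀ x, μ (closedBall x r) = ENNReal.ofReal (g r x) := by
      intro x
      rw [hμdef, withDensity_apply _ measurableSet_closedBall,
        ← ofReal_integral_eq_lintegral_ofReal hfi.integrableOn
          (ae_restrict_of_ae (Eventually.of_forall hf_nonneg))]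
    have h4 : ∫⁻ x, μ (closedBall x r) ∂μ
        = ∫⁻ x, ENNReal.ofReal (f x) * ENNReal.ofReal (g r x) ∂volume := by
      simp_rw [h3]
      rw [hμdef, lintegral_withDensity_eq_lintegral_mul volume
        (hf_cont.measurable.ennreal_ofReal) ((hg_cont r).measurable.ennreal_ofReal)]
      rfl
    have hint : Integrable (fun x => f x * g r x) (volume : Measure (EuclideanSpace ℝ (Fin d))) := by
      apply Integrable.mono' (hfi.mul_const (M * (r ^ d * ζ)))
        ((hf_cont.mul (hg_cont r)).aestronglyMeasurable)
      refine Eventually.of_forall fun x => ?_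
      show ‖f x * g r x‖ ≤ _
      rw [Real.norm_eq_abs, abs_of_nonneg (mul_nonneg (hf_nonneg x) (hg_nonneg r x))]
      exact mul_le_mul_of_nonneg_left (hg_le r hr.le x) (hf_nonneg x)
    have h5 : ∫⁻ x, ENNReal.ofReal (f x) * ENNReal.ofReal (g r x) ∂volume
        = ENNReal.ofReal (∫ x, f x * g r x) := by
      rw [ofReal_integral_eq_lintegral_ofReal hint
        (Eventually.of_forall fun x => mul_nonneg (hf_nonneg x) (hg_nonneg r x))]
      congr 1
      ext x
      rw [ENNReal.ofReal_mul (hf_nonneg x)]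
    rw [h1, h2, h4, h5, ENNReal.toReal_ofReal
      (integral_nonneg fun x => mul_nonneg (hf_nonneg x) (hg_nonneg r x))]
  -- final limit via dominated convergence
  have hmain : Tendsto (fun r : ℝ => ∫ x, f x * g r x / r ^ d)
      (nhdsWithin 0 (Set.Ioi 0)) (nhds (∫ x, ζ * f x ^ 2)) := by
    apply tendsto_integral_filter_of_dominated_convergence
      (bound := fun x => M * ζ * f x)
    · refine Eventually.of_forall fun r => ?_
      exact ((hf_cont.mul (hg_cont r)).div_const _).aestronglyMeasurable
    · filter_upwards [self_mem_nhdsWithin] with r hr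
      refine Eventually.of_forall fun x => ?_
      have hr0 : (0:ℝ) < r := hr
      have hrd0 : (0:ℝ) < r ^ d := pow_pos hr0 d
      rw [Real.norm_eq_abs, abs_of_nonneg
        (div_nonneg (mul_nonneg (hf_nonneg x) (hg_nonneg r x)) hrd0.le)]
      rw [div_le_iff₀ hrd0]
      calc f x * g r x ≤ f x * (M * (r ^ d * ζ)) :=
            mul_le_mul_of_nonneg_left (hg_le r hr0.le x) (hf_nonneg x)
        _ = M * ζ * f x * r ^ d := by ring
    · exact (hfi.const_mul (M * ζ))
    · refine Eventually.of_forall fun x => ?_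
      have h := (pointwise_limit hf_cont hfi x).mul_const (f x)
      have heq : ∀ r : ℝ, f x * g r x / r ^ d = g r x / r ^ d * f x := fun r => by ring
      simp_rw [heq]
      convert h using 2
      ring
  have hfinal : ∫ x, ζ * f x ^ 2 = ζ * ∫ x, f x ^ 2 := integral_const_mul ζ _
  rw [hfinal] at hmain
  apply hmain.congr'
  filter_upwards [self_mem_nhdsWithin] with r hr
  have hr0 : (0:ℝ) < r := hr
  rw [hkey r hr0, ← integral_div]
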